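/- Combined narrowing–promotion is equivariant: let σ ∈ S_m be a permutation mapping the set {i_1,…,i_k} onto itself. Then for every f : S_m → ℝ^d, ((f^{(σ)})↓_{(i_1,…,i_k)})↑^{(1,…,m)} = ((f↓_{(i_1,…,i_k)})↑^{(1,…,m)})^{(σ)}. -/

import Mathlib

/-- `σ ∈ S_m|_{(i_1,…,i_k)}`: the permutation `σ` of `{1,…,m}` sends each of the
first `k` positions into the set `{i_1,…,i_k}`. -/
def IsRestricted {m k : ℕ} (hkm : k ≤ m) (i : Fin k → Fin m) (σ : Equiv.Perm (Fin m)) : Prop :=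
  ∀ p : Fin k, σ (Fin.castLE hkm p) ∈ Set.range i

-- The restricted permutation `σ↓_{(i_1,…,i_k)}` as a function `{1,…,k} → {1,…,k}`:
-- `σ↓(p) = q` iff `σ(p) = i_q` (well defined when `σ` is restricted and `i` is injective).
noncomputable def restrictFun {m k : ℕ} (hk : 1 ≤ k) (hkm : k ≤ m) (i : Fin k → Fin m)
    (σ : Equiv.Perm (Fin m)) : Fin k → Fin k :=
  haveI : Nonempty (Fin k) := ⟨⟨0, hk⟩⟩
  fun p => Function.invFun i (σ (Fin.castLE hkm p))

-- The restricted permutation `σ↓_{(i_1,…,i_k)}` as an element of `S_k`.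
noncomputable def restrictPerm {m k : ℕ} (hk : 1 ≤ k) (hkm : k ≤ m) (i : Fin k → Fin m)
    (σ : Equiv.Perm (Fin m)) : Equiv.Perm (Fin k) :=
  if h : Function.Bijective (restrictFun hk hkm i σ) then Equiv.ofBijective _ h else 1

-- Narrowing: `f↓_{(i_1,…,i_k)}(ω) = (m−k)!⁻¹ · Σ_{τ restricted, τ↓ = ω} f(τ)`.
open Classical in
noncomputable def narrow {m k : ℕ} (hk : 1 ≤ k) (hkm : k ≤ m) (i : Fin k → Fin m)
    {V : Type*} [AddCommGroup V] [Module ℝ V]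
    (f : Equiv.Perm (Fin m) → V) (ω : Equiv.Perm (Fin k)) : V :=
  ((m - k).factorial : ℝ)⁻¹ •
    ∑ τ : Equiv.Perm (Fin m),
      if IsRestricted hkm i τ ∧ restrictFun hk hkm i τ = ⇑ω then f τ else 0

-- Promotion: `g↑^{(1,…,m)}(τ) = g(τ↓)` if `τ` is restricted, and `0` otherwise.
open Classical in
noncomputable def promote {m k : ℕ} (hk : 1 ≤ k) (hkm : k ≤ m) (i : Fin k → Fin m)
    {V : Type*} [AddCommGroup V] [Module ℝ V]
    (g : Equiv.Perm (Fin k) → V) (τ : Equiv.Perm (Fin m)) : V :=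
  if IsRestricted hkm i τ then g (restrictPerm hk hkm i τ) else 0

/-- Left translation: `h^{(τ)}(π) = h(τ⁻¹ π)`. -/
def lTranslate {G V : Type*} [Group G] (τ : G) (h : G → V) : G → V :=
  fun π => h (τ⁻¹ * π)

-- Combined narrowing–promotion is equivariant: if `σ ∈ S_m` maps `{i_1,…,i_k}` onto itself,
-- then for every `f : S_m → ℝ^d`,
-- `((f^{(σ)})↓_{(i_1,…,i_k)})↑^{(1,…,m)} = ((f↓_{(i_1,…,i_k)})↑^{(1,…,m)})^{(σ)}`.
section Aux

variable {m k : ℕ}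

lemma mem_range_invFun {i : Fin k → Fin m} (hk : 1 ≤ k) (hi : Function.Injective i)
    {y : Fin m} (hy : y ∈ Set.range i) :
    haveI : Nonempty (Fin k) := ⟨⟨0, hk⟩⟩
    i (Function.invFun i y) = y := by
  haveI : Nonempty (Fin k) := ⟨⟨0, hk⟩⟩
  exact Function.invFun_eq hy

lemma invFun_i_apply {i : Fin k → Fin m} (hk : 1 ≤ k) (hi : Function.Injective i) (q : Fin k) :
    haveI : Nonempty (Fin k) := ⟨⟨0, hk⟩⟩
    Function.invFun i (i q) = q := by
  haveI : Nonempty (Fin k) := ⟨⟨0, hk⟩⟩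
  exact Function.leftInverse_invFun hi q

lemma restrictFun_injective (hk : 1 ≤ k) (hkm : k ≤ m) {i : Fin k → Fin m}
    (hi : Function.Injective i) {τ : Equiv.Perm (Fin m)} (hτ : IsRestricted hkm i τ) :
    Function.Bijective (restrictFun hk hkm i τ) := by
  rw [← Finite.injective_iff_bijective]
  intro p1 p2 h
  have h1 := mem_range_invFun hk hi (hτ p1)
  have h2 := mem_range_invFun hk hi (hτ p2)
  have : τ (Fin.castLE hkm p1) = τ (Fin.castLE hkm p2) := by
    rw [← h1, ← h2]
    simpa [restrictFun] using congrArg i h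
  have := τ.injective this
  exact Fin.castLE_injective hkm this

lemma i_restrictFun (hk : 1 ≤ k) (hkm : k ≤ m) {i : Fin k → Fin m}
    (hi : Function.Injective i) {τ : Equiv.Perm (Fin m)} (hτ : IsRestricted hkm i τ)
    (p : Fin k) : i (restrictFun hk hkm i τ p) = τ (Fin.castLE hkm p) :=
  mem_range_invFun hk hi (hτ p)

end Aux
theorem narrow_promote_equivariant {m k d : ℕ} (hk : 1 ≤ k) (hkm : k ≤ m)
    (i : Fin k → Fin m) (hi : Function.Injective i)
    (σ : Equiv.Perm (Fin m)) (hσ : ⇑σ '' Set.range i = Set.range i)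
    (f : Equiv.Perm (Fin m) → Fin d → ℝ) :
    promote hk hkm i (narrow hk hkm i (lTranslate σ f))
      = lTranslate σ (promote hk hkm i (narrow hk hkm i f)) := by
  classical
  haveI : Nonempty (Fin k) := ⟨⟨0, hk⟩⟩
  -- the induced permutation ρ on Fin k
  set ρfun : Fin k → Fin k := fun q => Function.invFun i (σ (i q)) with hρfun
  have hσmem : ∀ q : Fin k, σ (i q) ∈ Set.range i := by
    intro q
    rw [← hσ]
    exact ⟨i q, ⟨q, rfl⟩, rfl⟩
  have hσi : ∀ q : Fin k, σ (i q) = i (ρfun q) := by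
    intro q
    exact (mem_range_invFun hk hi (hσmem q)).symm
  have hρinj : Function.Bijective ρfun := by
    rw [← Finite.injective_iff_bijective]
    intro q1 q2 h
    have : σ (i q1) = σ (i q2) := by rw [hσi q1, hσi q2, h]
    exact hi (σ.injective this)
  set ρ : Equiv.Perm (Fin k) := Equiv.ofBijective ρfun hρinj with hρ
  have hρapp : ∀ q, ρ q = ρfun q := fun q => rfl
  have hσinv : ∀ q : Fin k, σ⁻¹ (i q) = i (ρ⁻¹ q) := by
    intro q
    have : σ (i (ρ⁻¹ q)) = i q := by
      rw [hσi (ρ⁻¹ q), ← hρapp, Equiv.Perm.inv_def, Equiv.apply_symm_apply]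
    rw [← this, Equiv.Perm.inv_def σ, Equiv.symm_apply_apply]
  -- membership transfer
  have hmem : ∀ y : Fin m, σ⁻¹ y ∈ Set.range i ↔ y ∈ Set.range i := by
    intro y
    constructor
    · rintro ⟨q, hq⟩
      have : y = σ (i q) := by rw [hq, Equiv.Perm.inv_def, Equiv.apply_symm_apply]
      rw [this, hσi q]
      exact ⟨ρfun q, rfl⟩
    · rintro ⟨q, hq⟩
      rw [← hq, hσinv q]
      exact ⟨ρ⁻¹ q, rfl⟩
  -- restrictedness transfer
  have hres : ∀ τ : Equiv.Perm (Fin m),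
      IsRestricted hkm i (σ⁻¹ * τ) ↔ IsRestricted hkm i τ := by
    intro τ
    unfold IsRestricted
    simp only [Equiv.Perm.mul_apply]
    exact forall_congr' fun p => hmem _
  -- restrictFun transfer
  have hrf : ∀ τ : Equiv.Perm (Fin m), IsRestricted hkm i τ →
      restrictFun hk hkm i (σ⁻¹ * τ) = ⇑ρ⁻¹ ∘ restrictFun hk hkm i τ := by
    intro τ hτ
    funext p
    have h1 : τ (Fin.castLE hkm p) = i (restrictFun hk hkm i τ p) :=
      (i_restrictFun hk hkm hi hτ p).symm
    simp only [restrictFun, Equiv.Perm.mul_apply, Function.comp_apply]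
    rw [show σ⁻¹ (τ (Fin.castLE hkm p)) = i (ρ⁻¹ (Function.invFun i (τ (Fin.castLE hkm p))))
      from by rw [h1, invFun_i_apply hk hi, hσinv], invFun_i_apply hk hi]
  -- narrow transfer
  have hnarrow : ∀ ω : Equiv.Perm (Fin k),
      narrow hk hkm i (lTranslate σ f) ω = narrow hk hkm i f (ρ⁻¹ * ω) := by
    intro ω
    unfold narrow
    congr 1
    rw [← Equiv.sum_comp (Equiv.mulLeft σ⁻¹)
      (fun τ => if IsRestricted hkm i τ ∧ restrictFun hk hkm i τ = ⇑(ρ⁻¹ * ω) then f τ else 0)]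
    apply Finset.sum_congr rfl
    intro τ _
    simp only [Equiv.coe_mulLeft, lTranslate]
    by_cases hτ : IsRestricted hkm i τ
    · have hres' : IsRestricted hkm i (σ⁻¹ * τ) := (hres τ).mpr hτ
      have heq : restrictFun hk hkm i (σ⁻¹ * τ) = ⇑ρ⁻¹ ∘ restrictFun hk hkm i τ := hrf τ hτ
      have hiff : restrictFun hk hkm i (σ⁻¹ * τ) = ⇑ρ⁻¹ ∘ ⇑ω ↔
          restrictFun hk hkm i τ = ⇑ω := by
        rw [heq]
        constructor
        · intro h
          funext p
          have := congrFun h p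
          simp only [Function.comp_apply] at this
          exact ρ⁻¹.injective this
        · intro h; rw [h]
      simp only [Equiv.Perm.coe_mul, hiff]
      simp [hτ, hres']
    · have hres' : ¬ IsRestricted hkm i (σ⁻¹ * τ) := fun h => hτ ((hres τ).mp h)
      simp [hτ, hres']
  -- restrictPerm transfer
  have hrp : ∀ τ : Equiv.Perm (Fin m), IsRestricted hkm i τ →
      restrictPerm hk hkm i (σ⁻¹ * τ) = ρ⁻¹ * restrictPerm hk hkm i τ := by
    intro τ hτ
    have hb : Function.Bijective (restrictFun hk hkm i τ) := restrictFun_injective hk hkm hi hτ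
    have hb' : Function.Bijective (restrictFun hk hkm i (σ⁻¹ * τ)) :=
      restrictFun_injective hk hkm hi ((hres τ).mpr hτ)
    apply Equiv.ext
    intro p
    have h1 : ⇑(restrictPerm hk hkm i (σ⁻¹ * τ)) = restrictFun hk hkm i (σ⁻¹ * τ) := by
      rw [restrictPerm, dif_pos hb']; rfl
    have h2 : ⇑(restrictPerm hk hkm i τ) = restrictFun hk hkm i τ := by
      rw [restrictPerm, dif_pos hb]; rfl
    have := congrFun (hrf τ hτ) p
    simp only [Equiv.Perm.coe_mul, Function.comp_apply, h1, h2]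
    exact this
  -- conclusion
  funext τ
  simp only [lTranslate, promote]
  by_cases hτ : IsRestricted hkm i τ
  · have hres' : IsRestricted hkm i (σ⁻¹ * τ) := (hres τ).mpr hτ
    rw [if_pos hτ, if_pos hres', hnarrow, hrp τ hτ]
  · have hres' : ¬ IsRestricted hkm i (σ⁻¹ * τ) := fun h => hτ ((hres τ).mp h)
    rw [if_neg hτ, if_neg hres']
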